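/- Let G be a connected graph on n₀ vertices without a triangle-factor, such that there exists an edge e (not in G, with both endpoints in V(G)) whose addition makes G + e have a triangle-factor with |E(G)| + 1 = (4/3)·n₀ − 1. Then this edge e is unique: there is at most one such edge with both endpoints in V(G). -/

import Mathlib

open SimpleGraph Finset

def IsTriangleFactor {V : Type*} [DecidableEq V] (G : SimpleGraph V) (P : Finset (Finset V)) : Prop :=
  (∀ t ∈ P, G.IsNClique 3 t) ∧ (∀ v : V, ∃! t, t ∈ P ∧ v ∈ t)

-- Lemma 1: connected graph has at least n-1 edges
lemma conn_card_le {W : Type*} [Fintype W] (Q : SimpleGraph W) [Fintype Q.edgeSet]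
    (h : Q.Connected) : Fintype.card W ≤ Q.edgeFinset.card + 1 := by
  classical
  obtain ⟨r⟩ := h.nonempty
  have key : ∀ v : W, ∃ u, v ≠ r → Q.Adj v u ∧ Q.dist u r < Q.dist v r := by
    intro v
    by_cases hv : v = r
    · exact ⟨v, fun h' => absurd hv h'⟩
    · obtain ⟨p, hp⟩ := h.exists_walk_length_eq_dist v r
      have hd : 0 < Q.dist v r := h.pos_dist_of_ne hv
      cases p with
      | nil => rw [← hp] at hd; simp at hd
      | @cons _ u _ hadj q =>
        refine ⟨u, fun _ => ⟨hadj, ?_⟩⟩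
        have h1 := Q.dist_le q
        rw [SimpleGraph.Walk.length_cons] at hp
        omega
  choose f hf using key
  have hsub : ∀ v ∈ Finset.univ.erase r, s(v, f v) ∈ Q.edgeFinset := by
    intro v hv
    rw [mem_edgeFinset, mem_edgeSet]
    exact (hf v (Finset.mem_erase.1 hv).1).1
  have hinj : Set.InjOn (fun v => s(v, f v)) (Finset.univ.erase r : Finset W) := by
    intro v hv w hw hvw
    simp only [Finset.coe_erase, Set.mem_diff, Set.mem_singleton_iff] at hv hw
    rcases Sym2.eq_iff.mp hvw with ⟨h1, _⟩ | ⟨h1, h2⟩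
    · exact h1
    · exfalso
      have hv' := (hf v hv.2).2
      have hw' := (hf w hw.2).2
      rw [h2] at hv'
      rw [h1] at hv'
      omega
  have hle := Finset.card_le_card_of_injOn _ hsub hinj
  rw [Finset.card_erase_of_mem (Finset.mem_univ r), Finset.card_univ] at hle
  have : 0 < Fintype.card W := Fintype.card_pos_iff.2 ⟨r⟩
  omega

-- Lemma 2: if Q is connected and an edge u-w lies on a cycle (reachable after deletion),
-- then the number of edges is at least n.
lemma card_not_bridge {W : Type*} [Fintype W] (Q : SimpleGraph W) [Fintype Q.edgeSet]
    (hc : Q.Connected) (u w : W) (hadj : Q.Adj u w)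
    (hr : (Q.deleteEdges {s(u, w)}).Reachable u w) :
    Fintype.card W ≤ Q.edgeFinset.card := by
  classical
  set Q' := Q.deleteEdges {s(u, w)} with hQ'
  have hwalk : ∀ x y : W, Q.Walk x y → Q'.Reachable x y := by
    intro x y p
    induction p with
    | nil => exact Reachable.refl _
    | @cons x₁ y₁ z₁ ha p ih =>
      refine Reachable.trans ?_ ih
      by_cases he : s(x₁, y₁) = s(u, w)
      · rcases Sym2.eq_iff.mp he with ⟨rfl, rfl⟩ | ⟨rfl, rfl⟩
        · exact hr
        · exact hr.symm
      · exact SimpleGraph.Adj.reachable (by rw [hQ', SimpleGraph.deleteEdges_adj]; exact ⟨ha, by simpa using he⟩)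
  have hconn' : Q'.Connected := by
    have : Nonempty W := hc.nonempty
    refine Connected.mk ?_
    intro x y
    exact hwalk x y (hc x y).some
  have hfin : Q'.edgeFinset = Q.edgeFinset.erase s(u, w) := by
    ext e
    simp only [mem_edgeFinset, Finset.mem_erase, hQ', SimpleGraph.edgeSet_deleteEdges,
      Set.mem_diff, Set.mem_singleton_iff]
    tauto
  have hmem : s(u, w) ∈ Q.edgeFinset := by rw [mem_edgeFinset, mem_edgeSet]; exact hadj
  have h1 := conn_card_le Q' hconn'
  rw [hfin, Finset.card_erase_of_mem hmem] at h1
  have : 0 < Q.edgeFinset.card := Finset.card_pos.2 ⟨_, hmem⟩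
  omega

-- Lemma 3: number of non-diagonal pairs in a 3-element finset
lemma tri_edge_card {V : Type*} [DecidableEq V] {t : Finset V} (h : t.card = 3) :
    (t.sym2.filter (fun e => ¬ e.IsDiag)).card = 3 := by
  have h6 : t.sym2.card = 6 := by rw [Finset.card_sym2, h]; rfl
  have hdiag : t.sym2.filter (fun e => e.IsDiag) = t.image Sym2.diag := by
    ext e
    simp only [Finset.mem_filter, Finset.mem_image]
    constructor
    · rintro ⟨hmem, hd⟩
      obtain ⟨a, rfl⟩ := (⟨_, Sym2.diag_diagElem hd⟩ : ∃ a, Sym2.diag a = e)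
      exact ⟨a, Finset.diag_mem_sym2_iff.1 hmem, rfl⟩
    · rintro ⟨a, ha, rfl⟩
      exact ⟨Finset.diag_mem_sym2_iff.2 ha, Sym2.diag_isDiag a⟩
  have h3 : (t.sym2.filter (fun e => e.IsDiag)).card = 3 := by
    rw [hdiag, Finset.card_image_of_injective _ Sym2.diag_injective, h]
  have hsum := Finset.card_filter_add_card_filter_not
    (s := t.sym2) (p := fun e => e.IsDiag)
  omega

-- quotient graph on triangles of P
def QG {V : Type*} [DecidableEq V] (H : SimpleGraph V) (P : Finset (Finset V)) :
    SimpleGraph {x : Finset V // x ∈ P} where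
  Adj s t := s ≠ t ∧ ∃ x ∈ s.1, ∃ y ∈ t.1, H.Adj x y
  symm := ⟨by rintro s t ⟨hne, x, hx, y, hy, hxy⟩; exact ⟨hne.symm, y, hy, x, hx, hxy.symm⟩⟩
  loopless := ⟨by rintro s ⟨hne, -⟩; exact hne rfl⟩


-- Key structural lemma
lemma keyL {V : Type*} [Fintype V] [DecidableEq V] (H : SimpleGraph V) [Fintype H.edgeSet]
    (hconn : H.Connected) (P : Finset (Finset V)) (hP : IsTriangleFactor H P)
    (hcard : 3 * (H.edgeFinset.card + 1) = 4 * Fintype.card V)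
    {K : Finset V} (hK : H.IsNClique 3 K) : K ∈ P := by
  classical
  obtain ⟨hcli, hcov⟩ := hP
  have hex : ∀ v : V, ∃ t, t ∈ P ∧ v ∈ t := fun v => (hcov v).exists
  choose T hT1 hT2 using hex
  have hTu : ∀ (v : V) (t : Finset V), t ∈ P → v ∈ t → t = T v := by
    intro v t ht hv
    exact ExistsUnique.unique (hcov v) ⟨ht, hv⟩ ⟨hT1 v, hT2 v⟩
  have hcard3 : ∀ t ∈ P, t.card = 3 := fun t ht => (hcli t ht).2
  -- |V| = 3 * |P|
  have hdisj : ∀ t1 ∈ P, ∀ t2 ∈ P, t1 ≠ t2 → Disjoint t1 t2 := by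
    intro t1 h1 t2 h2 hne
    rw [Finset.disjoint_left]
    intro v hv1 hv2
    exact hne ((hTu v t1 h1 hv1).trans (hTu v t2 h2 hv2).symm)
  have hunion : (Finset.univ : Finset V) = P.biUnion (fun t => t) := by
    ext v
    simp only [Finset.mem_biUnion, Finset.mem_univ, true_iff]
    exact ⟨T v, hT1 v, hT2 v⟩
  have hn3 : Fintype.card V = 3 * P.card := by
    rw [← Finset.card_univ, hunion,
      Finset.card_biUnion (fun t1 h1 t2 h2 hne => hdisj t1 h1 t2 h2 hne)]
    rw [Finset.sum_congr rfl (fun t ht => hcard3 t ht)]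
    simp [mul_comm]
  set k := P.card with hk
  have hEH : H.edgeFinset.card + 1 = 4 * k := by omega
  -- internal and cross edges
  set crossE := H.edgeFinset.filter (fun e => ¬ (e.map T).IsDiag) with hcrossE
  set intE := H.edgeFinset.filter (fun e => (e.map T).IsDiag) with hintE
  have hsplit : intE.card + crossE.card = H.edgeFinset.card :=
    Finset.card_filter_add_card_filter_not (s := H.edgeFinset)
      (p := fun e => (e.map T).IsDiag)
  have hintcard : intE.card = 3 * k := by
    have heq : intE = P.biUnion (fun t => t.sym2.filter (fun e => ¬ e.IsDiag)) := by
      ext e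
      induction e using Sym2.ind with
      | _ x y =>
        simp only [hintE, Finset.mem_filter, mem_edgeFinset, mem_edgeSet, Sym2.map_pair_eq,
          Sym2.isDiag_iff_proj_eq, Finset.mem_biUnion, Finset.mk_mem_sym2_iff]
        constructor
        · rintro ⟨hadj, hd⟩
          exact ⟨T x, hT1 x, ⟨hT2 x, by rw [hd]; exact hT2 y⟩, hadj.ne⟩
        · rintro ⟨t, ht, ⟨hx, hy⟩, hne⟩
          refine ⟨(hcli t ht).1 hx hy hne, ?_⟩
          rw [← hTu x t ht hx, ← hTu y t ht hy]
    rw [heq, Finset.card_biUnion]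
    · rw [Finset.sum_congr rfl (fun t ht => tri_edge_card (hcard3 t ht))]
      simp [mul_comm, hk]
    · intro t1 h1 t2 h2 hne
      rw [Function.onFun_apply, Finset.disjoint_left]
      intro e he1 he2
      revert he1 he2
      induction e using Sym2.ind with
      | _ x y =>
        intro he1 he2
        simp only [Finset.mem_filter, Finset.mk_mem_sym2_iff] at he1 he2
        exact (Finset.disjoint_left.1 (hdisj t1 h1 t2 h2 hne)) he1.1.1 he2.1.1
  have hcross : crossE.card + 1 = k := by omega
  -- quotient graph
  set Q := QG H P with hQ
  have hQadj : ∀ s t : {x : Finset V // x ∈ P},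
      Q.Adj s t ↔ s ≠ t ∧ ∃ x ∈ s.1, ∃ y ∈ t.1, H.Adj x y := fun s t => Iff.rfl
  set Tp : V → {x : Finset V // x ∈ P} := fun v => ⟨T v, hT1 v⟩ with hTp
  have hTps : ∀ (v : V) (s : {x : Finset V // x ∈ P}), v ∈ s.1 → Tp v = s :=
    fun v s hv => Subtype.ext (hTu v s.1 s.2 hv).symm
  have hPPcard : Fintype.card {x : Finset V // x ∈ P} = k := Fintype.card_coe P
  -- connectivity of Q
  have hQwalk : ∀ (x y : V), H.Walk x y → Q.Reachable (Tp x) (Tp y) := by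
    intro x y p
    induction p with
    | nil => exact Reachable.refl _
    | @cons x₁ y₁ z₁ ha p ih =>
      refine Reachable.trans ?_ ih
      by_cases heq : Tp x₁ = Tp y₁
      · rw [heq]
      · exact SimpleGraph.Adj.reachable ⟨heq, x₁, hT2 x₁, y₁, hT2 y₁, ha⟩
  have hQconn : Q.Connected := by
    have hne : Nonempty {x : Finset V // x ∈ P} := by
      obtain ⟨v⟩ := hconn.nonempty
      exact ⟨⟨T v, hT1 v⟩⟩
    refine Connected.mk ?_
    intro s t
    obtain ⟨x, hx⟩ := Finset.card_pos.1 (by rw [hcard3 s.1 s.2]; norm_num : 0 < s.1.card)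
    obtain ⟨y, hy⟩ := Finset.card_pos.1 (by rw [hcard3 t.1 t.2]; norm_num : 0 < t.1.card)
    have := hQwalk x y (hconn x y).some
    rwa [hTps x s hx, hTps y t hy] at this
  -- the image of cross edges is exactly the edge set of Q
  set φ : Sym2 V → Sym2 {x : Finset V // x ∈ P} := Sym2.map Tp with hφ
  have himg : crossE.image φ = Q.edgeFinset := by
    ext e'
    simp only [Finset.mem_image]
    constructor
    · rintro ⟨e, he, rfl⟩
      revert he
      induction e using Sym2.ind with
      | _ x y =>
        intro he
        simp only [hcrossE, Finset.mem_filter, mem_edgeFinset, mem_edgeSet, Sym2.map_pair_eq,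
          Sym2.isDiag_iff_proj_eq] at he
        obtain ⟨hadj, hne⟩ := he
        rw [hφ, mem_edgeFinset, Sym2.map_pair_eq, mem_edgeSet]
        exact ⟨fun h => hne (congrArg Subtype.val h), x, hT2 x, y, hT2 y, hadj⟩
    · intro he'
      revert he'
      induction e' using Sym2.ind with
      | _ s t =>
        intro he'
        rw [mem_edgeFinset, mem_edgeSet] at he'
        obtain ⟨hst, x, hx, y, hy, hadj⟩ := he'
        refine ⟨s(x, y), ?_, ?_⟩
        · simp only [hcrossE, Finset.mem_filter, mem_edgeFinset, mem_edgeSet, Sym2.map_pair_eq,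
            Sym2.isDiag_iff_proj_eq]
          refine ⟨hadj, fun h => hst ?_⟩
          rw [← hTps x s hx, ← hTps y t hy]
          exact Subtype.ext h
        · rw [hφ, Sym2.map_pair_eq, hTps x s hx, hTps y t hy]
  have hQle : Q.edgeFinset.card ≤ crossE.card := by
    rw [← himg]; exact Finset.card_image_le
  have hQge := conn_card_le Q hQconn
  rw [hPPcard] at hQge
  have hQcard : (crossE.image φ).card = crossE.card := by
    rw [himg]; omega
  have hinj : Set.InjOn φ crossE := Finset.injOn_of_card_image_eq hQcard
  -- now analyse the triangle K
  obtain ⟨x, y, z, hxy, hxz, hyz, rfl⟩ := Finset.card_eq_three.1 hK.2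
  have haxy : H.Adj x y := hK.1 (by simp) (by simp) hxy
  have haxz : H.Adj x z := hK.1 (by simp) (by simp) hxz
  have hayz : H.Adj y z := hK.1 (by simp) (by simp) hyz
  have hcmem : ∀ u v : V, H.Adj u v → T u ≠ T v → s(u, v) ∈ crossE := by
    intro u v hadj hne
    simp only [hcrossE, Finset.mem_filter, mem_edgeFinset, mem_edgeSet, Sym2.map_pair_eq,
      Sym2.isDiag_iff_proj_eq]
    exact ⟨hadj, hne⟩
  by_cases h1 : T x = T y
  · by_cases h2 : T x = T z
    · -- all in the same triangle of P
      have hsub : ({x, y, z} : Finset V) ⊆ T x := by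
        intro v hv
        simp only [Finset.mem_insert, Finset.mem_singleton] at hv
        rcases hv with rfl | rfl | rfl
        · exact hT2 v
        · rw [h1]; exact hT2 v
        · rw [h2]; exact hT2 v
      have : ({x, y, z} : Finset V) = T x :=
        Finset.eq_of_subset_of_card_le hsub (by rw [hcard3 (T x) (hT1 x), hK.2])
      rw [this]; exact hT1 x
    · -- T x = T y ≠ T z
      exfalso
      have hc1 := hcmem x z haxz h2
      have hc2 := hcmem y z hayz (h1 ▸ h2)
      have heq : φ s(x, z) = φ s(y, z) := by
        rw [hφ, Sym2.map_pair_eq, Sym2.map_pair_eq]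
        have : Tp x = Tp y := Subtype.ext h1
        rw [this]
      have := hinj hc1 hc2 heq
      rw [Sym2.eq_iff] at this
      rcases this with ⟨h, -⟩ | ⟨h, h'⟩
      · exact hxy h
      · exact hxz h
  · by_cases h2 : T x = T z
    · -- T x = T z ≠ T y
      exfalso
      have hc1 := hcmem x y haxy h1
      have hc2 := hcmem z y (hayz.symm) (h2 ▸ h1)
      have heq : φ s(x, y) = φ s(z, y) := by
        rw [hφ, Sym2.map_pair_eq, Sym2.map_pair_eq]
        have : Tp x = Tp z := Subtype.ext h2
        rw [this]
      have := hinj hc1 hc2 heq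
      rw [Sym2.eq_iff] at this
      rcases this with ⟨h, -⟩ | ⟨h, h'⟩
      · exact hxz h
      · exact hxy h
    · by_cases h3 : T y = T z
      · -- T y = T z ≠ T x
        exfalso
        have hc1 := hcmem y x haxy.symm (fun h => h1 h.symm)
        have hc2 := hcmem z x haxz.symm (fun h => h2 h.symm)
        have heq : φ s(y, x) = φ s(z, x) := by
          rw [hφ, Sym2.map_pair_eq, Sym2.map_pair_eq]
          have : Tp y = Tp z := Subtype.ext h3
          rw [this]
        have := hinj hc1 hc2 heq
        rw [Sym2.eq_iff] at this
        rcases this with ⟨h, -⟩ | ⟨h, h'⟩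
        · exact hyz h
        · exact hxy h.symm
      · -- all three in distinct triangles: Q has a cycle
        exfalso
        have hnxy : Tp x ≠ Tp y := fun h => h1 (congrArg Subtype.val h)
        have hnxz : Tp x ≠ Tp z := fun h => h2 (congrArg Subtype.val h)
        have hnyz : Tp y ≠ Tp z := fun h => h3 (congrArg Subtype.val h)
        have hQ1 : Q.Adj (Tp x) (Tp y) := ⟨hnxy, x, hT2 x, y, hT2 y, haxy⟩
        have hQ2 : Q.Adj (Tp x) (Tp z) := ⟨hnxz, x, hT2 x, z, hT2 z, haxz⟩
        have hQ3 : Q.Adj (Tp z) (Tp y) := ⟨fun h => hnyz h.symm, z, hT2 z, y, hT2 y, hayz.symm⟩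
        have hr : (Q.deleteEdges {s(Tp x, Tp y)}).Reachable (Tp x) (Tp y) := by
          have e1 : (Q.deleteEdges {s(Tp x, Tp y)}).Adj (Tp x) (Tp z) := by
            rw [SimpleGraph.deleteEdges_adj]
            refine ⟨hQ2, ?_⟩
            simp only [Set.mem_singleton_iff, Sym2.eq_iff]
            rintro (⟨-, h⟩ | ⟨h, -⟩)
            · exact hnyz h.symm
            · exact hnxy h
          have e2 : (Q.deleteEdges {s(Tp x, Tp y)}).Adj (Tp z) (Tp y) := by
            rw [SimpleGraph.deleteEdges_adj]
            refine ⟨hQ3, ?_⟩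
            simp only [Set.mem_singleton_iff, Sym2.eq_iff]
            rintro (⟨h, -⟩ | ⟨-, h⟩)
            · exact hnxz h.symm
            · exact hnxy h.symm
          exact (SimpleGraph.Adj.reachable e1).trans (SimpleGraph.Adj.reachable e2)
        have := card_not_bridge Q hQconn _ _ hQ1 hr
        rw [hPPcard] at this
        omega

theorem stmt6 {V : Type*} [Fintype V] [DecidableEq V] (G : SimpleGraph V) [DecidableRel G.Adj]
    (n₀ : ℕ) (hn : Fintype.card V = n₀) (hconn : G.Connected)
    (hnoTF : ¬ ∃ P, IsTriangleFactor G P)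
    (hcount : 3 * (G.edgeFinset.card + 1) + 3 = 4 * n₀)
    (a b a' b' : V)
    (hab : a ≠ b) (hnadj : ¬ G.Adj a b)
    (hab' : a' ≠ b') (hnadj' : ¬ G.Adj a' b')
    (hTF : ∃ P, IsTriangleFactor (G ⊔ SimpleGraph.fromEdgeSet {s(a, b)}) P)
    (hTF' : ∃ P, IsTriangleFactor (G ⊔ SimpleGraph.fromEdgeSet {s(a', b')}) P) :
    s(a, b) = s(a', b') := by
  classical
  obtain ⟨P, hP⟩ := hTF
  obtain ⟨P', hP'⟩ := hTF'
  set H := G ⊔ SimpleGraph.fromEdgeSet {s(a, b)} with hH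
  have hle : G ≤ H := le_sup_left
  have hHconn : H.Connected := hconn.mono hle
  have hset : H.edgeSet = insert s(a, b) G.edgeSet := by
    rw [hH, SimpleGraph.edgeSet_sup, SimpleGraph.edgeSet_fromEdgeSet]
    ext e
    simp only [Set.mem_union, Set.mem_diff, Set.mem_singleton_iff, Set.mem_setOf_eq,
      Set.mem_insert_iff]
    constructor
    · rintro (h | ⟨rfl, -⟩)
      · exact Or.inr h
      · exact Or.inl rfl
    · rintro (rfl | h)
      · exact Or.inr ⟨rfl, by simp [hab]⟩
      · exact Or.inl h
  have habG : s(a, b) ∉ G.edgeFinset := by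
    rw [mem_edgeFinset, mem_edgeSet]; exact hnadj
  have hfinH : H.edgeFinset = insert s(a, b) G.edgeFinset := by
    ext e
    simp only [mem_edgeFinset, Finset.mem_insert, hset, Set.mem_insert_iff, mem_edgeSet]
  have hEH : H.edgeFinset.card = G.edgeFinset.card + 1 := by
    rw [hfinH, Finset.card_insert_of_notMem habG]
  have hcardH : 3 * (H.edgeFinset.card + 1) = 4 * Fintype.card V := by
    rw [hEH, hn]; omega
  -- a' and b' are in a common triangle of P'
  have hcommon : ∃ K' ∈ P', a' ∈ K' ∧ b' ∈ K' := by
    by_contra hno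
    push_neg at hno
    apply hnoTF
    refine ⟨P', ⟨?_, hP'.2⟩⟩
    intro t ht
    refine ⟨?_, (hP'.1 t ht).2⟩
    intro u hu v hv huv
    have hadj := (hP'.1 t ht).1 hu hv huv
    rw [SimpleGraph.sup_adj, SimpleGraph.fromEdgeSet_adj] at hadj
    rcases hadj with h | ⟨hmem, -⟩
    · exact h
    · exfalso
      rw [Set.mem_singleton_iff, Sym2.eq_iff] at hmem
      rcases hmem with ⟨rfl, rfl⟩ | ⟨rfl, rfl⟩
      · exact hno t ht hu hv
      · exact hno t ht hv hu
  obtain ⟨K', hK'P, haK', hbK'⟩ := hcommon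
  -- all other triangles of P' belong to P
  have hsubP : ∀ t ∈ P', t ≠ K' → t ∈ P := by
    intro t ht htne
    apply keyL H hHconn P hP hcardH
    refine ⟨?_, (hP'.1 t ht).2⟩
    intro u hu v hv huv
    have hadj := (hP'.1 t ht).1 hu hv huv
    rw [SimpleGraph.sup_adj, SimpleGraph.fromEdgeSet_adj] at hadj
    rcases hadj with h | ⟨hmem, -⟩
    · exact hle h
    · exfalso
      rw [Set.mem_singleton_iff, Sym2.eq_iff] at hmem
      have hmem' : a' ∈ t ∧ b' ∈ t := by
        rcases hmem with ⟨rfl, rfl⟩ | ⟨rfl, rfl⟩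
        · exact ⟨hu, hv⟩
        · exact ⟨hv, hu⟩
      exact htne ((hP'.2 a').unique ⟨ht, hmem'.1⟩ ⟨hK'P, haK'⟩)
  -- the triangle of P containing a' has the same vertex set as K'
  obtain ⟨S, ⟨hSP, haS⟩, -⟩ := hP.2 a'
  have hSsub : S ⊆ K' := by
    intro v hvS
    by_contra hvK
    obtain ⟨t, ⟨htP', hvt⟩, -⟩ := hP'.2 v
    have htne : t ≠ K' := fun h => hvK (h ▸ hvt)
    have htP : t ∈ P := hsubP t htP' htne
    have hts : t = S := (hP.2 v).unique ⟨htP, hvt⟩ ⟨hSP, hvS⟩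
    exact htne ((hP'.2 a').unique ⟨hts ▸ htP', hts ▸ haS⟩ ⟨hK'P, haK'⟩)
  have hScard : S.card = 3 := (hP.1 S hSP).2
  have hK'card : K'.card = 3 := (hP'.1 K' hK'P).2
  have hSK : S = K' := Finset.eq_of_subset_of_card_le hSsub (by omega)
  have hbS : b' ∈ S := hSK ▸ hbK'
  have hadjH : H.Adj a' b' := (hP.1 S hSP).1 haS hbS hab'
  rw [hH, SimpleGraph.sup_adj, SimpleGraph.fromEdgeSet_adj] at hadjH
  rcases hadjH with h | ⟨hmem, -⟩
  · exact absurd h hnadj'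
  · rw [Set.mem_singleton_iff] at hmem
    exact hmem.symm
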